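/- For every integer N ≥ 1, one has ( (2N+2)/(N+2) )^N ≥ C(N, ⌊N/2⌋), the central binomial coefficient of N. -/

import Mathlib

lemma central_step (N : ℕ) (h : 1 ≤ N) :
    (N + 1).choose ((N + 1) / 2) ≤ 2 * N.choose (N / 2) := by
  obtain ⟨k, hk⟩ : ∃ k, (N + 1) / 2 = k + 1 := ⟨(N + 1) / 2 - 1, by omega⟩
  rw [hk, Nat.choose_succ_succ]
  have h1 := Nat.choose_le_middle k N
  have h2 := Nat.choose_le_middle (k + 1) N
  simp only [Nat.succ_eq_add_one] at *
  omega

lemma central_le (N : ℕ) (hN : 5 ≤ N) :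
    (N.choose (N / 2) : ℝ) * Real.exp 1 ≤ 2 ^ N := by
  induction N, hN using Nat.le_induction with
  | base =>
    have := Real.exp_one_lt_d9
    norm_num [Nat.choose]
    nlinarith
  | succ n hn ih =>
    have hs := central_step n (by omega)
    have hs' : ((n + 1).choose ((n + 1) / 2) : ℝ) ≤ 2 * (n.choose (n / 2) : ℝ) := by
      exact_mod_cast hs
    have he : (0 : ℝ) < Real.exp 1 := Real.exp_pos 1
    calc ((n + 1).choose ((n + 1) / 2) : ℝ) * Real.exp 1
        ≤ 2 * ((n.choose (n / 2) : ℝ) * Real.exp 1) := by nlinarith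
      _ ≤ 2 * 2 ^ n := by linarith
      _ = 2 ^ (n + 1) := by ring

/-- For every integer `N ≥ 1`, `((2N+2)/(N+2))^N ≥ C(N, ⌊N/2⌋)`. -/
theorem central_binom_bound (N : ℕ) (hN : 1 ≤ N) :
    ((2 * (N : ℝ) + 2) / ((N : ℝ) + 2)) ^ N ≥ (N.choose (N / 2) : ℝ) := by
  rcases lt_or_ge N 5 with h5 | h5
  · interval_cases N <;> norm_num [Nat.choose] <;> nlinarith
  · have hNpos : (0 : ℝ) < (N : ℝ) + 1 := by positivity
    -- (N+1)/(N+2) ≥ exp(-(1/(N+1)))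
    have h1 : Real.exp (-(1 / ((N : ℝ) + 1))) ≤ ((N : ℝ) + 1) / ((N : ℝ) + 2) := by
      have hx : ((N : ℝ) + 2) / ((N : ℝ) + 1) ≤ Real.exp (1 / ((N : ℝ) + 1)) := by
        have := Real.add_one_le_exp (1 / ((N : ℝ) + 1))
        have h2 : ((N : ℝ) + 2) / ((N : ℝ) + 1) = 1 / ((N : ℝ) + 1) + 1 := by
          field_simp; ring
        linarith
      have hd : (0 : ℝ) < ((N : ℝ) + 2) / ((N : ℝ) + 1) := by positivity
      rw [Real.exp_neg]
      calc (Real.exp (1 / ((N : ℝ) + 1)))⁻¹ ≤ (((N : ℝ) + 2) / ((N : ℝ) + 1))⁻¹ :=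
            inv_anti₀ hd hx
        _ = ((N : ℝ) + 1) / ((N : ℝ) + 2) := by rw [inv_div]
    have hpow : Real.exp (-1) ≤ (((N : ℝ) + 1) / ((N : ℝ) + 2)) ^ N := by
      calc Real.exp (-1) ≤ Real.exp (-(1 / ((N : ℝ) + 1)) * N) := by
            apply Real.exp_le_exp.mpr
            rw [neg_mul, neg_le_neg_iff, div_mul_eq_mul_div, div_le_one hNpos]
            push_cast; linarith
        _ = Real.exp (-(1 / ((N : ℝ) + 1))) ^ N := by
            rw [← Real.exp_nat_mul]; ring_nf
        _ ≤ (((N : ℝ) + 1) / ((N : ℝ) + 2)) ^ N := by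
            apply pow_le_pow_left₀ (Real.exp_pos _).le h1
    have hce := central_le N h5
    have hkey : (2 * (N : ℝ) + 2) / ((N : ℝ) + 2) = 2 * (((N : ℝ) + 1) / ((N : ℝ) + 2)) := by
      field_simp
    rw [ge_iff_le, hkey, mul_pow]
    have he : (0 : ℝ) < Real.exp 1 := Real.exp_pos 1
    have hexp : Real.exp (-1) = (Real.exp 1)⁻¹ := by
      rw [← Real.exp_neg]
    calc (N.choose (N / 2) : ℝ) ≤ 2 ^ N / Real.exp 1 := by
          rw [le_div_iff₀ he]; exact hce
      _ ≤ 2 ^ N * (((N : ℝ) + 1) / ((N : ℝ) + 2)) ^ N := by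
          rw [div_eq_mul_inv, ← hexp]
          exact mul_le_mul_of_nonneg_left hpow (by positivity)
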